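/- Let F be a field of characteristic 2, ℓ ∈ Fⁿ, R(ℓ²) = F[z]/⟨z₁²+ℓ₁²,…,zₙ²+ℓₙ²⟩, and for r ∈ R(ℓ²) let |r| ∈ F be the unique constant with r² = |r|². Then r is invertible in R(ℓ²) if and only if |r| ≠ 0, in which case r⁻¹ = |r|⁻² · r. -/

import Mathlib

open MvPolynomial

/-- an element `r` of `R(ℓ²)` with absolute value `c` (i.e. `r² = c²`)
is invertible iff `c ≠ 0`, in which case `r⁻¹ = c⁻² • r`. -/
theorem stmt9 (F : Type*) [Field F] [CharP F 2] (n : ℕ) (ℓ : Fin n → F)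
    (r : MvPolynomial (Fin n) F ⧸
        Ideal.span (Set.range fun i : Fin n => X i ^ 2 + C (ℓ i ^ 2)))
    (c : F) (h : r ^ 2 = algebraMap F _ (c ^ 2)) :
    (IsUnit r ↔ c ≠ 0) ∧ (c ≠ 0 → ((c⁻¹ ^ 2) • r) * r = 1) := by
  have h0 : Ideal.span (Set.range fun i : Fin n => X i ^ 2 + C (ℓ i ^ 2)) ≤
      RingHom.ker ((aeval ℓ : MvPolynomial (Fin n) F →ₐ[F] F) : MvPolynomial (Fin n) F →+* F) := by
    rw [Ideal.span_le]
    rintro _ ⟨i, rfl⟩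
    simp only [SetLike.mem_coe, RingHom.mem_ker, AlgHom.coe_toRingHom, map_add, map_pow,
      aeval_X, aeval_C, Algebra.algebraMap_self, RingHom.id_apply]
    have : (2 : F) = 0 := CharP.cast_eq_zero F 2
    linear_combination ℓ i ^ 2 * this
  let φ : (MvPolynomial (Fin n) F ⧸
      Ideal.span (Set.range fun i : Fin n => X i ^ 2 + C (ℓ i ^ 2))) →+* F :=
    Ideal.Quotient.lift _ _ (fun a ha => h0 ha)
  have hφalg : ∀ a : F, φ (algebraMap F _ a) = a := by
    intro a
    show φ (Ideal.Quotient.mk _ (C a)) = a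
    simp [φ]
  have hinv : c ≠ 0 → ((c⁻¹ ^ 2) • r) * r = 1 := by
    intro hc
    have e : (c⁻¹ ^ 2) • r = algebraMap F _ (c⁻¹ ^ 2) * r := Algebra.smul_def (c⁻¹ ^ 2) r
    rw [e, mul_assoc, ← sq, h, ← map_mul, show c⁻¹ ^ 2 * c ^ 2 = 1 by field_simp, map_one]
  have hfwd : IsUnit r → c ≠ 0 := by
    intro hu hc
    subst hc
    have hr2 : r ^ 2 = 0 := by rw [h]; norm_num
    have h2 : φ r ^ 2 = 0 := by rw [← map_pow, hr2, map_zero]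
    have hφr : φ r = 0 := sq_eq_zero_iff.mp h2
    have : IsUnit (φ r) := hu.map φ
    rw [hφr] at this
    exact not_isUnit_zero this
  exact ⟨⟨hfwd, fun hc => IsUnit.of_mul_eq_one (a := r) _ (by rw [mul_comm]; exact hinv hc)⟩, hinv⟩
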